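/- Let γ > 0, C > 0 and z ∈ ℝ with 0 < z ≤ √(2γC). Then u = 0 is a global minimizer over ℝ of the function φ(u) = γC·χ(u) + (1/2)(u − z)², where χ(u) = 1 if u > 0 and χ(u) = 0 if u ≤ 0. Moreover, if 0 < z < √(2γC) (strict inequality), then u = 0 is the unique global minimizer of φ. -/
import Mathlib


/-- The scalar `L_{0/1}` proximal objective
`φ(u) = γC·χ(u) + (1/2)(u − z)²`, where `χ(u) = 1` if `u > 0` and `0` otherwise. -/
noncomputable def scalarProxObj (γ C z u : ℝ) : ℝ :=
  γ * C * (if 0 < u then (1 : ℝ) else 0) + (1 / 2) * (u - z) ^ 2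

/-- for `0 < z ≤ √(2γC)`, `u = 0` globally minimizes the scalar
`L_{0/1}` proximal objective; if moreover `z < √(2γC)`, it is the unique global
minimizer. -/
theorem scalarProx_zero_min (γ C z : ℝ) (hγ : 0 < γ) (hC : 0 < C)
    (hz0 : 0 < z) (hz : z ≤ Real.sqrt (2 * γ * C)) :
    (∀ u : ℝ, scalarProxObj γ C z 0 ≤ scalarProxObj γ C z u) ∧
    (z < Real.sqrt (2 * γ * C) →
      ∀ u : ℝ, (∀ v : ℝ, scalarProxObj γ C z u ≤ scalarProxObj γ C z v) → u = 0) := by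
  have h2 : z ^ 2 ≤ 2 * γ * C := by
    have := Real.sq_sqrt (by positivity : (0:ℝ) ≤ 2 * γ * C)
    nlinarith [sq_nonneg (Real.sqrt (2*γ*C) - z), Real.sqrt_nonneg (2*γ*C)]
  constructor
  · intro u
    unfold scalarProxObj
    by_cases hu : 0 < u <;> simp [hu] <;> nlinarith [sq_nonneg u, sq_nonneg (u - z)]
  · intro hlt u hmin
    have h2' : z ^ 2 < 2 * γ * C := by
      have := Real.sq_sqrt (by positivity : (0:ℝ) ≤ 2 * γ * C)
      nlinarith [Real.sqrt_nonneg (2*γ*C)]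
    have h0 := hmin 0
    unfold scalarProxObj at h0
    by_contra hne
    rcases lt_trichotomy u 0 with h | h | h
    · simp [not_lt.mpr h.le] at h0
      nlinarith
    · exact hne h
    · simp [h] at h0
      nlinarith
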